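/- In the ReLU-network setting, the expected loss θ ↦ E_z[f(θ, z)] is Lipschitz continuous on Θ. -/

import Mathlib

open MeasureTheory
open scoped BigOperators

noncomputable section

/-- Parameter space of an `n`-layer fully connected network with layer widths `κ`:
for each layer `i` a weight matrix `W_i ∈ ℝ^{κ(i+1) × κ i}` and a bias `b_i ∈ ℝ^{κ(i+1)}`. -/
abbrev NNParams (κ : ℕ → ℕ) (n : ℕ) :=
  (i : Fin n) → ((Fin (κ (i.1 + 1)) → Fin (κ i.1) → ℝ) × (Fin (κ (i.1 + 1)) → ℝ))

/-- The layers of the ReLU network: `x₀ = z`, `x_{i+1} = max(0, W_{i+1} x_i + b_{i+1})`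
entrywise for the hidden layers `i + 1 ≤ n - 1`, and the affine output layer
`x_n = W_n x_{n-1} + b_n` (junk value `0` beyond layer `n`). -/
def reluNet (κ : ℕ → ℕ) (n : ℕ) (θ : NNParams κ n) (z : Fin (κ 0) → ℝ) :
    (i : ℕ) → Fin (κ i) → ℝ
  | 0 => z
  | (i + 1) =>
    if h : i < n then
      fun j =>
        let pre := (∑ l, (θ ⟨i, h⟩).1 j l * reluNet κ n θ z i l) + (θ ⟨i, h⟩).2 j
        if i + 2 ≤ n then max 0 pre else pre
    else 0

/-- Squared-error loss `f(θ,z) = ‖x_n(θ,z) − f̂(z)‖²` of the ReLU network. -/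
def reluLoss (κ : ℕ → ℕ) (n : ℕ) (fhat : (Fin (κ 0) → ℝ) → (Fin (κ n) → ℝ))
    (θ : NNParams κ n) (z : Fin (κ 0) → ℝ) : ℝ :=
  ∑ j, (reluNet κ n θ z n j - fhat z j) ^ 2

/-- The standard Gaussian measure on `ℝ^d` (i.i.d. `N(0,1)` coordinates). -/
def stdGaussian (d : ℕ) : Measure (Fin d → ℝ) :=
  Measure.pi fun _ => ProbabilityTheory.gaussianReal 0 1

/-- `θ` gives a.e. nonzero hidden-layer preactivations: for a.e. input `z`, every
hidden-layer preactivation `W_i^j x_{i-1} + b_i^j` is nonzero (so that `∇_θ f(θ,z)`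
exists for a.e. `z`). -/
def NonzeroPreact (κ : ℕ → ℕ) (n : ℕ) (θ : NNParams κ n) : Prop :=
  ∀ᵐ z ∂(stdGaussian (κ 0)), ∀ (i : ℕ) (h : i < n), i + 2 ≤ n →
    ∀ j : Fin (κ (i + 1)),
      (∑ l, (θ ⟨i, h⟩).1 j l * reluNet κ n θ z i l) + (θ ⟨i, h⟩).2 j ≠ 0


namespace ReluAux

open ProbabilityTheory

lemma reluNet_succ {κ : ℕ → ℕ} {n : ℕ} (θ : NNParams κ n) (z : Fin (κ 0) → ℝ)
    {i : ℕ} (h : i < n) (j : Fin (κ (i+1))) :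
    reluNet κ n θ z (i+1) j =
      (if i + 2 ≤ n then
        max 0 ((∑ l, (θ ⟨i, h⟩).1 j l * reluNet κ n θ z i l) + (θ ⟨i, h⟩).2 j)
      else ((∑ l, (θ ⟨i, h⟩).1 j l * reluNet κ n θ z i l) + (θ ⟨i, h⟩).2 j)) := by
  simp only [reluNet, dif_pos h]

lemma reluNet_succ_of_ge {κ : ℕ → ℕ} {n : ℕ} (θ : NNParams κ n) (z : Fin (κ 0) → ℝ)
    {i : ℕ} (h : ¬ i < n) (j : Fin (κ (i+1))) :
    reluNet κ n θ z (i+1) j = 0 := by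
  simp only [reluNet, dif_neg h, Pi.zero_apply]

lemma abs_relu_le (a : ℝ) : |max 0 a| ≤ |a| := by
  rw [abs_of_nonneg (le_max_left 0 a)]
  exact max_le (abs_nonneg a) (le_abs_self a)

/-- bound on the network values -/
def nb (κ : ℕ → ℕ) (R : ℝ) : ℕ → ℝ
  | 0 => 1
  | (i+1) => κ i * R * nb κ R i + R

/-- Lipschitz-in-θ bound on the network values -/
def lb (κ : ℕ → ℕ) (R : ℝ) : ℕ → ℝ
  | 0 => 0
  | (i+1) => κ i * (nb κ R i + R * lb κ R i) + 1

lemma nb_nonneg {κ : ℕ → ℕ} {R : ℝ} (hR : 0 ≤ R) : ∀ i, 0 ≤ nb κ R i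
  | 0 => zero_le_one
  | (i+1) => by
      have h := nb_nonneg (κ := κ) hR i
      simp only [nb]
      have : (0:ℝ) ≤ (κ i : ℝ) := Nat.cast_nonneg _
      positivity

lemma lb_nonneg {κ : ℕ → ℕ} {R : ℝ} (hR : 0 ≤ R) : ∀ i, 0 ≤ lb κ R i
  | 0 => le_refl 0
  | (i+1) => by
      have h := lb_nonneg (κ := κ) hR i
      have h2 := nb_nonneg (κ := κ) hR i
      simp only [lb]
      have : (0:ℝ) ≤ (κ i : ℝ) := Nat.cast_nonneg _
      positivity

variable {κ : ℕ → ℕ} {n : ℕ} {R D : ℝ}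

lemma abs_reluNet_le (hR : 0 ≤ R) (θ : NNParams κ n)
    (hW : ∀ (i : Fin n) j l, |(θ i).1 j l| ≤ R)
    (hB : ∀ (i : Fin n) j, |(θ i).2 j| ≤ R)
    (z : Fin (κ 0) → ℝ) :
    ∀ i (j : Fin (κ i)), |reluNet κ n θ z i j| ≤ nb κ R i * (1 + ‖z‖) := by
  have hz : (0:ℝ) ≤ ‖z‖ := norm_nonneg z
  have hA1 : (1:ℝ) ≤ 1 + ‖z‖ := by linarith
  have hA0 : (0:ℝ) ≤ 1 + ‖z‖ := by linarith
  intro i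
  induction i with
  | zero =>
      intro j
      show |z j| ≤ 1 * (1 + ‖z‖)
      rw [one_mul]
      calc |z j| = ‖z j‖ := rfl
        _ ≤ ‖z‖ := norm_le_pi_norm z j
        _ ≤ 1 + ‖z‖ := by linarith
  | succ i ih =>
      intro j
      by_cases h : i < n
      · have key : |(∑ l, (θ ⟨i, h⟩).1 j l * reluNet κ n θ z i l) + (θ ⟨i, h⟩).2 j|
            ≤ nb κ R (i+1) * (1 + ‖z‖) := by
          have hsum : |∑ l, (θ ⟨i, h⟩).1 j l * reluNet κ n θ z i l|
              ≤ (κ i : ℝ) * (R * (nb κ R i * (1 + ‖z‖))) := by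
            refine (Finset.abs_sum_le_sum_abs _ _).trans ?_
            have hterm : ∀ l ∈ Finset.univ, |(θ ⟨i, h⟩).1 j l * reluNet κ n θ z i l|
                ≤ R * (nb κ R i * (1 + ‖z‖)) := by
              intro l _
              rw [abs_mul]
              exact mul_le_mul (hW _ _ _) (ih l) (abs_nonneg _) hR
            refine (Finset.sum_le_card_nsmul _ _ _ hterm).trans ?_
            simp [Finset.card_univ, nsmul_eq_mul]
          calc |(∑ l, (θ ⟨i, h⟩).1 j l * reluNet κ n θ z i l) + (θ ⟨i, h⟩).2 j|
              ≤ |∑ l, (θ ⟨i, h⟩).1 j l * reluNet κ n θ z i l| + |(θ ⟨i, h⟩).2 j| :=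
                abs_add_le _ _
            _ ≤ (κ i : ℝ) * (R * (nb κ R i * (1 + ‖z‖))) + R * (1 + ‖z‖) := by
                refine add_le_add hsum ?_
                calc |(θ ⟨i, h⟩).2 j| ≤ R := hB _ _
                  _ = R * 1 := (mul_one R).symm
                  _ ≤ R * (1 + ‖z‖) := mul_le_mul_of_nonneg_left hA1 hR
            _ = nb κ R (i+1) * (1 + ‖z‖) := by simp only [nb]; ring
        rw [reluNet_succ θ z h j]
        split_ifs with h2
        · exact (abs_relu_le _).trans key
        · exact key
      · rw [reluNet_succ_of_ge θ z h j]
        simp only [abs_zero]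
        exact mul_nonneg (nb_nonneg hR _) hA0

lemma abs_reluNet_sub_le (hR : 0 ≤ R) (hD : 0 ≤ D) (θ θ' : NNParams κ n)
    (hW : ∀ (i : Fin n) j l, |(θ i).1 j l| ≤ R)
    (hB : ∀ (i : Fin n) j, |(θ i).2 j| ≤ R)
    (hW' : ∀ (i : Fin n) j l, |(θ' i).1 j l| ≤ R)
    (hB' : ∀ (i : Fin n) j, |(θ' i).2 j| ≤ R)
    (hdW : ∀ (i : Fin n) j l, |(θ i).1 j l - (θ' i).1 j l| ≤ D)
    (hdB : ∀ (i : Fin n) j, |(θ i).2 j - (θ' i).2 j| ≤ D)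
    (z : Fin (κ 0) → ℝ) :
    ∀ i (j : Fin (κ i)),
      |reluNet κ n θ z i j - reluNet κ n θ' z i j| ≤ lb κ R i * (1 + ‖z‖) * D := by
  have hz : (0:ℝ) ≤ ‖z‖ := norm_nonneg z
  have hA1 : (1:ℝ) ≤ 1 + ‖z‖ := by linarith
  have hA0 : (0:ℝ) ≤ 1 + ‖z‖ := by linarith
  intro i
  induction i with
  | zero =>
      intro j
      show |z j - z j| ≤ _
      simp [lb]
  | succ i ih =>
      intro j
      by_cases h : i < n
      · have hxb := abs_reluNet_le hR θ hW hB z i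
        have hxb' := abs_reluNet_le hR θ' hW' hB' z i
        have key : |((∑ l, (θ ⟨i, h⟩).1 j l * reluNet κ n θ z i l) + (θ ⟨i, h⟩).2 j)
              - ((∑ l, (θ' ⟨i, h⟩).1 j l * reluNet κ n θ' z i l) + (θ' ⟨i, h⟩).2 j)|
            ≤ lb κ R (i+1) * (1 + ‖z‖) * D := by
          have hterm : ∀ l ∈ Finset.univ,
              |(θ ⟨i, h⟩).1 j l * reluNet κ n θ z i l
                - (θ' ⟨i, h⟩).1 j l * reluNet κ n θ' z i l|
              ≤ (nb κ R i + R * lb κ R i) * (1 + ‖z‖) * D := by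
            intro l _
            have e : (θ ⟨i, h⟩).1 j l * reluNet κ n θ z i l
                - (θ' ⟨i, h⟩).1 j l * reluNet κ n θ' z i l
                = ((θ ⟨i, h⟩).1 j l - (θ' ⟨i, h⟩).1 j l) * reluNet κ n θ z i l
                  + (θ' ⟨i, h⟩).1 j l * (reluNet κ n θ z i l - reluNet κ n θ' z i l) := by
              ring
            rw [e]
            calc _ ≤ |((θ ⟨i, h⟩).1 j l - (θ' ⟨i, h⟩).1 j l) * reluNet κ n θ z i l|
                  + |(θ' ⟨i, h⟩).1 j l * (reluNet κ n θ z i l - reluNet κ n θ' z i l)| :=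
                abs_add_le _ _
              _ ≤ D * (nb κ R i * (1 + ‖z‖)) + R * (lb κ R i * (1 + ‖z‖) * D) := by
                  rw [abs_mul, abs_mul]
                  exact add_le_add
                    (mul_le_mul (hdW _ _ _) (hxb l) (abs_nonneg _) hD)
                    (mul_le_mul (hW' _ _ _) (ih l) (abs_nonneg _) hR)
              _ = (nb κ R i + R * lb κ R i) * (1 + ‖z‖) * D := by ring
          have hsum : |∑ l, ((θ ⟨i, h⟩).1 j l * reluNet κ n θ z i l
                - (θ' ⟨i, h⟩).1 j l * reluNet κ n θ' z i l)|
              ≤ (κ i : ℝ) * ((nb κ R i + R * lb κ R i) * (1 + ‖z‖) * D) := by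
            refine (Finset.abs_sum_le_sum_abs _ _).trans ?_
            refine (Finset.sum_le_card_nsmul _ _ _ hterm).trans ?_
            simp [Finset.card_univ, nsmul_eq_mul]
          calc |((∑ l, (θ ⟨i, h⟩).1 j l * reluNet κ n θ z i l) + (θ ⟨i, h⟩).2 j)
              - ((∑ l, (θ' ⟨i, h⟩).1 j l * reluNet κ n θ' z i l) + (θ' ⟨i, h⟩).2 j)|
              = |(∑ l, ((θ ⟨i, h⟩).1 j l * reluNet κ n θ z i l
                  - (θ' ⟨i, h⟩).1 j l * reluNet κ n θ' z i l))
                  + ((θ ⟨i, h⟩).2 j - (θ' ⟨i, h⟩).2 j)| := by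
                rw [Finset.sum_sub_distrib]; ring_nf
            _ ≤ |∑ l, ((θ ⟨i, h⟩).1 j l * reluNet κ n θ z i l
                  - (θ' ⟨i, h⟩).1 j l * reluNet κ n θ' z i l)|
                  + |(θ ⟨i, h⟩).2 j - (θ' ⟨i, h⟩).2 j| := abs_add_le _ _
            _ ≤ (κ i : ℝ) * ((nb κ R i + R * lb κ R i) * (1 + ‖z‖) * D) + D * (1 + ‖z‖) := by
                refine add_le_add hsum ?_
                calc |(θ ⟨i, h⟩).2 j - (θ' ⟨i, h⟩).2 j| ≤ D := hdB _ _
                  _ = D * 1 := (mul_one D).symm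
                  _ ≤ D * (1 + ‖z‖) := mul_le_mul_of_nonneg_left hA1 hD
            _ = lb κ R (i+1) * (1 + ‖z‖) * D := by simp only [lb]; ring
        rw [reluNet_succ θ z h j, reluNet_succ θ' z h j]
        split_ifs with h2
        · refine le_trans ?_ key
          rw [max_comm 0 ((∑ l, (θ ⟨i, h⟩).1 j l * reluNet κ n θ z i l) + (θ ⟨i, h⟩).2 j),
            max_comm 0 ((∑ l, (θ' ⟨i, h⟩).1 j l * reluNet κ n θ' z i l) + (θ' ⟨i, h⟩).2 j)]
          exact abs_max_sub_max_le_abs _ _ 0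
        · exact key
      · rw [reluNet_succ_of_ge θ z h j, reluNet_succ_of_ge θ' z h j]
        simp only [sub_zero, abs_zero]
        exact mul_nonneg (mul_nonneg (lb_nonneg hR _) hA0) hD

lemma continuous_reluNet (θ : NNParams κ n) :
    ∀ i (j : Fin (κ i)), Continuous (fun z : Fin (κ 0) → ℝ => reluNet κ n θ z i j) := by
  intro i
  induction i with
  | zero => intro j; exact continuous_apply j
  | succ i ih =>
      intro j
      by_cases h : i < n
      · have hc : Continuous (fun z : Fin (κ 0) → ℝ =>
            (∑ l, (θ ⟨i, h⟩).1 j l * reluNet κ n θ z i l) + (θ ⟨i, h⟩).2 j) := by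
          refine Continuous.add ?_ continuous_const
          exact continuous_finset_sum _ fun l _ => (continuous_const.mul (ih l))
        by_cases h2 : i + 2 ≤ n
        · simp only [fun z => reluNet_succ θ z h j, if_pos h2]
          exact continuous_const.max hc
        · simp only [fun z => reluNet_succ θ z h j, if_neg h2]
          exact hc
      · simp only [fun z => reluNet_succ_of_ge θ z h j]
        exact continuous_const

lemma measurable_reluLoss (θ : NNParams κ n)
    (fhat : (Fin (κ 0) → ℝ) → (Fin (κ n) → ℝ)) (hfhat : Measurable fhat) :
    Measurable (fun z => reluLoss κ n fhat θ z) := by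
  unfold reluLoss
  refine Finset.measurable_sum _ fun j _ => ?_
  exact (((continuous_reluNet θ n j).measurable).sub
    ((measurable_pi_apply j).comp hfhat)).pow_const 2

instance instProbStdGaussian (d : ℕ) : IsProbabilityMeasure (stdGaussian d) := by
  unfold _root_.stdGaussian; infer_instance

lemma integrable_sq_gaussian : Integrable (fun x : ℝ => x ^ 2) (gaussianReal 0 1) := by
  rw [gaussianReal_of_var_ne_zero 0 one_ne_zero]
  rw [integrable_withDensity_iff (measurable_gaussianPDF 0 1)
    (Filter.Eventually.of_forall fun x => by
      rw [gaussianPDF_def]; exact ENNReal.ofReal_lt_top)]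
  have h := integrable_rpow_mul_exp_neg_mul_sq (b := (1:ℝ)/2) (by norm_num) (s := 2) (by norm_num)
  have h2 := h.const_mul ((Real.sqrt (2 * Real.pi))⁻¹)
  refine h2.congr ?_
  refine Filter.Eventually.of_forall fun x => ?_
  show (Real.sqrt (2 * Real.pi))⁻¹ * (x ^ (2:ℝ) * Real.exp (-(1/2) * x ^ 2))
      = x ^ 2 * (gaussianPDF 0 1 x).toReal
  rw [gaussianPDF_def, ENNReal.toReal_ofReal (gaussianPDFReal_nonneg _ _ _), gaussianPDFReal_def]
  have habs : x ^ (2:ℝ) = x ^ 2 := by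
    rw [show (2:ℝ) = ((2:ℕ):ℝ) by norm_num, Real.rpow_natCast]
  rw [habs]
  push_cast
  rw [show -(x - 0) ^ 2 / (2 * 1) = -(1/2) * x ^ 2 by ring]
  ring

lemma stdGaussian_map_eval (d : ℕ) (k : Fin d) :
    (stdGaussian d).map (fun z => z k) = gaussianReal 0 1 := by
  unfold _root_.stdGaussian
  ext s hs
  rw [Measure.map_apply (measurable_pi_apply k) hs]
  have hpre : (fun z : Fin d → ℝ => z k) ⁻¹' s
      = Set.pi Set.univ (Function.update (fun _ : Fin d => (Set.univ : Set ℝ)) k s) := by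
    ext z
    simp only [Set.mem_preimage, Set.mem_pi, Set.mem_univ, true_implies]
    constructor
    · intro hz i
      by_cases hik : i = k
      · subst hik; simpa using hz
      · simp [Function.update_of_ne hik]
    · intro hz; simpa using hz k
  rw [hpre, Measure.pi_pi]
  rw [Finset.prod_eq_single k ?_ ?_]
  · simp
  · intro i _ hik
    simp [Function.update_of_ne hik]
  · simp

lemma memLp_two_eval (d : ℕ) (k : Fin d) :
    MemLp (fun z : Fin d → ℝ => |z k|) 2 (stdGaussian d) := by
  have hmap := stdGaussian_map_eval d k
  have hint : Integrable (fun z : Fin d → ℝ => (z k) ^ 2) (stdGaussian d) := by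
    have h := integrable_sq_gaussian
    rw [← hmap] at h
    exact (integrable_map_measure ((measurable_id.pow_const 2).aestronglyMeasurable)
      (measurable_pi_apply k).aemeasurable).mp h
  refine (memLp_two_iff_integrable_sq ?_).mpr ?_
  · exact ((measurable_pi_apply k).abs).aestronglyMeasurable
  · simpa [sq_abs] using hint

lemma integrable_one_add_norm_sq (d : ℕ) :
    Integrable (fun z : Fin d → ℝ => (1 + ‖z‖) ^ 2) (stdGaussian d) := by
  have hS : MemLp (fun z : Fin d → ℝ => 1 + ∑ k, |z k|) 2 (stdGaussian d) := by
    refine MemLp.add (memLp_const 1) ?_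
    have := memLp_finset_sum (f := fun (k : Fin d) (z : Fin d → ℝ) => |z k|)
      Finset.univ (fun k _ => memLp_two_eval d k)
    simpa using this
  have hSsq : Integrable (fun z : Fin d → ℝ => (1 + ∑ k, |z k|) ^ 2) (stdGaussian d) :=
    (memLp_two_iff_integrable_sq hS.aestronglyMeasurable).mp hS
  refine hSsq.mono' ?_ ?_
  · exact ((continuous_const.add continuous_norm).pow 2).aestronglyMeasurable
  · refine Filter.Eventually.of_forall fun z => ?_
    have h1 : ‖z‖ ≤ ∑ k, |z k| := by
      refine (pi_norm_le_iff_of_nonneg (Finset.sum_nonneg fun k _ => abs_nonneg _)).mpr ?_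
      intro k
      exact Finset.single_le_sum (fun i _ => abs_nonneg (z i)) (Finset.mem_univ k)
    have h0 : (0:ℝ) ≤ 1 + ‖z‖ := by positivity
    rw [Real.norm_eq_abs, abs_of_nonneg (by positivity)]
    exact pow_le_pow_left₀ h0 (by linarith) 2

lemma integrable_one_add_norm (d : ℕ) :
    Integrable (fun z : Fin d → ℝ => 1 + ‖z‖) (stdGaussian d) := by
  refine (integrable_one_add_norm_sq d).mono' ?_ ?_
  · exact (continuous_const.add continuous_norm).aestronglyMeasurable
  · refine Filter.Eventually.of_forall fun z => ?_
    have h0 : (0:ℝ) ≤ ‖z‖ := norm_nonneg z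
    rw [Real.norm_eq_abs, abs_of_nonneg (by positivity)]
    exact le_self_pow₀ (by linarith) (by norm_num)

end ReluAux
/-- **Lipschitz continuity of the expected loss of the ReLU network on a bounded set
(Theorem 2.5, item 3).**  The expected loss `θ ↦ E_z[f(θ,z)]` is Lipschitz continuous
on the bounded convex set `Θ`. -/
theorem stmt_13 (κ : ℕ → ℕ) (n : ℕ) (hn : 1 ≤ n)
    (fhat : (Fin (κ 0) → ℝ) → (Fin (κ n) → ℝ)) (hfhat : Measurable fhat)
    (hmom0 : Integrable (fun z => ∑ j, (fhat z j) ^ 2) (stdGaussian (κ 0)))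
    (hmom1 : ∀ k : Fin (κ 0),
      Integrable (fun z => (∑ j, (fhat z j) ^ 2) * |z k|) (stdGaussian (κ 0)))
    (hmom2 : ∀ k : Fin (κ 0),
      Integrable (fun z => (∑ j, (fhat z j) ^ 2) * |z k| ^ 2) (stdGaussian (κ 0)))
    (hmom3 : ∀ k : Fin (κ 0),
      Integrable (fun z => Real.sqrt (∑ j, (fhat z j) ^ 2) * |z k| ^ 2) (stdGaussian (κ 0)))
    (hmom4 : ∀ k : Fin (κ 0),
      Integrable (fun z => (∑ j, (fhat z j) ^ 2) * |z k| ^ 3) (stdGaussian (κ 0)))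
    (Θ : Set (NNParams κ n)) (hΘb : Bornology.IsBounded Θ) (hΘc : Convex ℝ Θ)
    (hΘd : ∀ θ ∈ Θ, NonzeroPreact κ n θ) :
    ∃ C : NNReal, LipschitzOnWith C
      (fun θ => ∫ z, reluLoss κ n fhat θ z ∂(stdGaussian (κ 0))) Θ := by
  classical
  open ReluAux in
  obtain ⟨r, hr⟩ := hΘb.subset_closedBall 0
  set R : ℝ := max r 0 with hRdef
  have hR : (0:ℝ) ≤ R := le_max_right r 0
  have hΘR : ∀ θ ∈ Θ, ‖θ‖ ≤ R := by
    intro θ hθ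
    have h := hr hθ
    rw [Metric.mem_closedBall, dist_zero_right] at h
    exact h.trans (le_max_left r 0)
  have hWbound : ∀ θ ∈ Θ, ∀ (i : Fin n) j l, |(θ i).1 j l| ≤ R := by
    intro θ hθ i j l
    calc |(θ i).1 j l| = ‖(θ i).1 j l‖ := rfl
      _ ≤ ‖(θ i).1 j‖ := norm_le_pi_norm _ l
      _ ≤ ‖(θ i).1‖ := norm_le_pi_norm _ j
      _ ≤ ‖θ i‖ := norm_fst_le (θ i)
      _ ≤ ‖θ‖ := norm_le_pi_norm θ i
      _ ≤ R := hΘR θ hθ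
  have hBbound : ∀ θ ∈ Θ, ∀ (i : Fin n) j, |(θ i).2 j| ≤ R := by
    intro θ hθ i j
    calc |(θ i).2 j| = ‖(θ i).2 j‖ := rfl
      _ ≤ ‖(θ i).2‖ := norm_le_pi_norm _ j
      _ ≤ ‖θ i‖ := norm_snd_le (θ i)
      _ ≤ ‖θ‖ := norm_le_pi_norm θ i
      _ ≤ R := hΘR θ hθ
  have hdW : ∀ (θ θ' : NNParams κ n), ∀ (i : Fin n) j l,
      |(θ i).1 j l - (θ' i).1 j l| ≤ dist θ θ' := by
    intro θ θ' i j l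
    calc |(θ i).1 j l - (θ' i).1 j l| = dist ((θ i).1 j l) ((θ' i).1 j l) :=
          (Real.dist_eq _ _).symm
      _ ≤ dist ((θ i).1 j) ((θ' i).1 j) := dist_le_pi_dist _ _ l
      _ ≤ dist (θ i).1 (θ' i).1 := dist_le_pi_dist _ _ j
      _ ≤ dist (θ i) (θ' i) := by rw [Prod.dist_eq]; exact le_max_left _ _
      _ ≤ dist θ θ' := dist_le_pi_dist θ θ' i
  have hdB : ∀ (θ θ' : NNParams κ n), ∀ (i : Fin n) j,
      |(θ i).2 j - (θ' i).2 j| ≤ dist θ θ' := by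
    intro θ θ' i j
    calc |(θ i).2 j - (θ' i).2 j| = dist ((θ i).2 j) ((θ' i).2 j) :=
          (Real.dist_eq _ _).symm
      _ ≤ dist (θ i).2 (θ' i).2 := dist_le_pi_dist _ _ j
      _ ≤ dist (θ i) (θ' i) := by rw [Prod.dist_eq]; exact le_max_right _ _
      _ ≤ dist θ θ' := dist_le_pi_dist θ θ' i
  set F : (Fin (κ 0) → ℝ) → ℝ := fun z => ∑ j, (fhat z j) ^ 2 with hFdef
  have hFnn : ∀ z, 0 ≤ F z := fun z => Finset.sum_nonneg fun j _ => sq_nonneg _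
  have hFmeas : Measurable F :=
    Finset.measurable_sum _ fun j _ => ((measurable_pi_apply j).comp hfhat).pow_const 2
  have hIntAF : Integrable (fun z => (1 + ‖z‖) * F z) (stdGaussian (κ 0)) := by
    have hg : Integrable (fun z => F z + ∑ k, F z * |z k|) (stdGaussian (κ 0)) :=
      hmom0.add (integrable_finset_sum _ fun k _ => hmom1 k)
    refine hg.mono' ?_ ?_
    · exact ((continuous_const.add continuous_norm).measurable.mul hFmeas).aestronglyMeasurable
    · refine Filter.Eventually.of_forall fun z => ?_
      have h1 : ‖z‖ ≤ ∑ k, |z k| := by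
        refine (pi_norm_le_iff_of_nonneg (Finset.sum_nonneg fun k _ => abs_nonneg _)).mpr ?_
        intro k
        exact Finset.single_le_sum (fun i _ => abs_nonneg (z i)) (Finset.mem_univ k)
      have h0 : (0:ℝ) ≤ 1 + ‖z‖ := by positivity
      rw [Real.norm_eq_abs, abs_of_nonneg (mul_nonneg h0 (hFnn z))]
      calc (1 + ‖z‖) * F z ≤ (1 + ∑ k, |z k|) * F z :=
            mul_le_mul_of_nonneg_right (by linarith) (hFnn z)
        _ = F z + ∑ k, F z * |z k| := by
            rw [add_mul, one_mul, Finset.sum_mul]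
            congr 1
            exact Finset.sum_congr rfl fun k _ => mul_comm _ _
  set c1 : ℝ := 2 * lb κ R n * κ n * nb κ R n with hc1
  set c2 : ℝ := 2 * lb κ R n * κ n with hc2
  set c3 : ℝ := 2 * lb κ R n with hc3
  set G : (Fin (κ 0) → ℝ) → ℝ :=
    fun z => c1 * (1 + ‖z‖) ^ 2 + c2 * (1 + ‖z‖) + c3 * ((1 + ‖z‖) * F z) with hGdef
  have hIntG : Integrable G (stdGaussian (κ 0)) :=
    (((integrable_one_add_norm_sq (κ 0)).const_mul c1).add
      ((integrable_one_add_norm (κ 0)).const_mul c2)).add (hIntAF.const_mul c3)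
  have key : ∀ θ ∈ Θ, ∀ θ' ∈ Θ, ∀ z,
      |reluLoss κ n fhat θ z - reluLoss κ n fhat θ' z| ≤ G z * dist θ θ' := by
    intro θ hθ θ' hθ' z
    set D : ℝ := dist θ θ' with hDdef
    have hD : 0 ≤ D := dist_nonneg
    have hz : (0:ℝ) ≤ ‖z‖ := norm_nonneg z
    have hA1 : (1:ℝ) ≤ 1 + ‖z‖ := by linarith
    have hA0 : (0:ℝ) ≤ 1 + ‖z‖ := by linarith
    have hna := abs_reluNet_le hR θ (hWbound θ hθ) (hBbound θ hθ) z n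
    have hnb' := abs_reluNet_le hR θ' (hWbound θ' hθ') (hBbound θ' hθ') z n
    have hnd := abs_reluNet_sub_le hR hD θ θ' (hWbound θ hθ) (hBbound θ hθ)
      (hWbound θ' hθ') (hBbound θ' hθ') (hdW θ θ') (hdB θ θ') z n
    have hlbA : 0 ≤ lb κ R n * (1 + ‖z‖) * D :=
      mul_nonneg (mul_nonneg (lb_nonneg hR n) hA0) hD
    have hstep1 : |reluLoss κ n fhat θ z - reluLoss κ n fhat θ' z|
        ≤ (lb κ R n * (1 + ‖z‖) * D) *
          ∑ j, (|reluNet κ n θ z n j| + |reluNet κ n θ' z n j| + 2 * |fhat z j|) := by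
      unfold reluLoss
      rw [← Finset.sum_sub_distrib]
      refine (Finset.abs_sum_le_sum_abs _ _).trans ?_
      rw [Finset.mul_sum]
      refine Finset.sum_le_sum fun j _ => ?_
      have e : (reluNet κ n θ z n j - fhat z j) ^ 2 - (reluNet κ n θ' z n j - fhat z j) ^ 2
          = (reluNet κ n θ z n j - reluNet κ n θ' z n j) *
            (reluNet κ n θ z n j + reluNet κ n θ' z n j - 2 * fhat z j) := by ring
      rw [e, abs_mul]
      refine mul_le_mul (hnd j) ?_ (abs_nonneg _) hlbA
      rw [abs_le]
      constructor <;>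
        nlinarith [le_abs_self (reluNet κ n θ z n j), neg_abs_le (reluNet κ n θ z n j),
          le_abs_self (reluNet κ n θ' z n j), neg_abs_le (reluNet κ n θ' z n j),
          le_abs_self (fhat z j), neg_abs_le (fhat z j)]
    have hsum2 : ∑ j, (|reluNet κ n θ z n j| + |reluNet κ n θ' z n j| + 2 * |fhat z j|)
        ≤ 2 * (κ n : ℝ) * (nb κ R n * (1 + ‖z‖)) + 2 * ((κ n : ℝ) + F z) := by
      have hs1 : ∑ j, |reluNet κ n θ z n j| ≤ (κ n : ℝ) * (nb κ R n * (1 + ‖z‖)) := by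
        refine (Finset.sum_le_card_nsmul _ _ _ fun j _ => hna j).trans ?_
        simp [Finset.card_univ, nsmul_eq_mul]
      have hs2 : ∑ j, |reluNet κ n θ' z n j| ≤ (κ n : ℝ) * (nb κ R n * (1 + ‖z‖)) := by
        refine (Finset.sum_le_card_nsmul _ _ _ fun j _ => hnb' j).trans ?_
        simp [Finset.card_univ, nsmul_eq_mul]
      have hs3 : ∑ j, |fhat z j| ≤ (κ n : ℝ) + F z := by
        have : ∀ j ∈ Finset.univ, |fhat z j| ≤ 1 + (fhat z j) ^ 2 := by
          intro j _
          nlinarith [sq_nonneg (|fhat z j| - 1), abs_nonneg (fhat z j), sq_abs (fhat z j)]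
        refine (Finset.sum_le_sum this).trans ?_
        rw [Finset.sum_add_distrib]
        simp [hFdef, Finset.card_univ]
      calc ∑ j, (|reluNet κ n θ z n j| + |reluNet κ n θ' z n j| + 2 * |fhat z j|)
          = (∑ j, |reluNet κ n θ z n j|) + (∑ j, |reluNet κ n θ' z n j|)
            + 2 * ∑ j, |fhat z j| := by
            rw [Finset.sum_add_distrib, Finset.sum_add_distrib, ← Finset.mul_sum]
        _ ≤ (κ n : ℝ) * (nb κ R n * (1 + ‖z‖)) + (κ n : ℝ) * (nb κ R n * (1 + ‖z‖))
            + 2 * ((κ n : ℝ) + F z) := by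
            refine add_le_add (add_le_add hs1 hs2) ?_
            exact mul_le_mul_of_nonneg_left hs3 (by norm_num)
        _ = 2 * (κ n : ℝ) * (nb κ R n * (1 + ‖z‖)) + 2 * ((κ n : ℝ) + F z) := by ring
    calc |reluLoss κ n fhat θ z - reluLoss κ n fhat θ' z|
        ≤ (lb κ R n * (1 + ‖z‖) * D) *
          ∑ j, (|reluNet κ n θ z n j| + |reluNet κ n θ' z n j| + 2 * |fhat z j|) := hstep1
      _ ≤ (lb κ R n * (1 + ‖z‖) * D) *
          (2 * (κ n : ℝ) * (nb κ R n * (1 + ‖z‖)) + 2 * ((κ n : ℝ) + F z)) :=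
          mul_le_mul_of_nonneg_left hsum2 hlbA
      _ = G z * D := by rw [hGdef, hc1, hc2, hc3]; ring
  have hIntLoss : ∀ θ ∈ Θ, Integrable (fun z => reluLoss κ n fhat θ z) (stdGaussian (κ 0)) := by
    intro θ hθ
    have hgInt : Integrable
        (fun z => (2 * (κ n : ℝ) * (nb κ R n) ^ 2) * (1 + ‖z‖) ^ 2 + 2 * F z)
        (stdGaussian (κ 0)) :=
      ((integrable_one_add_norm_sq (κ 0)).const_mul _).add (hmom0.const_mul 2)
    refine hgInt.mono' (measurable_reluLoss θ fhat hfhat).aestronglyMeasurable ?_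
    refine Filter.Eventually.of_forall fun z => ?_
    have hna := abs_reluNet_le hR θ (hWbound θ hθ) (hBbound θ hθ) z n
    have hlossnn : 0 ≤ reluLoss κ n fhat θ z :=
      Finset.sum_nonneg fun j _ => sq_nonneg _
    rw [Real.norm_eq_abs, abs_of_nonneg hlossnn]
    have hterm : ∀ j ∈ Finset.univ, (reluNet κ n θ z n j - fhat z j) ^ 2
        ≤ 2 * (nb κ R n * (1 + ‖z‖)) ^ 2 + 2 * (fhat z j) ^ 2 := by
      intro j _
      have h1 := hna j
      have h2 : (reluNet κ n θ z n j) ^ 2 ≤ (nb κ R n * (1 + ‖z‖)) ^ 2 := by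
        rw [← sq_abs]
        exact pow_le_pow_left₀ (abs_nonneg _) h1 2
      nlinarith [sq_nonneg (reluNet κ n θ z n j + fhat z j)]
    calc reluLoss κ n fhat θ z
        ≤ ∑ j, (2 * (nb κ R n * (1 + ‖z‖)) ^ 2 + 2 * (fhat z j) ^ 2) :=
          Finset.sum_le_sum hterm
      _ = (κ n : ℝ) * (2 * (nb κ R n * (1 + ‖z‖)) ^ 2) + 2 * F z := by
          rw [Finset.sum_add_distrib, Finset.sum_const, ← Finset.mul_sum]
          simp [hFdef, Finset.card_univ, nsmul_eq_mul]
      _ = (2 * (κ n : ℝ) * (nb κ R n) ^ 2) * (1 + ‖z‖) ^ 2 + 2 * F z := by ring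
  refine ⟨(∫ z, G z ∂(stdGaussian (κ 0))).toNNReal, ?_⟩
  rw [lipschitzOnWith_iff_dist_le_mul]
  intro x hx y hy
  rw [Real.dist_eq, ← integral_sub (hIntLoss x hx) (hIntLoss y hy)]
  calc |∫ z, (reluLoss κ n fhat x z - reluLoss κ n fhat y z) ∂(stdGaussian (κ 0))|
      ≤ ∫ z, |reluLoss κ n fhat x z - reluLoss κ n fhat y z| ∂(stdGaussian (κ 0)) :=
        by
          simpa [Real.norm_eq_abs] using
            norm_integral_le_integral_norm (μ := stdGaussian (κ 0))
              (fun z => reluLoss κ n fhat x z - reluLoss κ n fhat y z)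
    _ ≤ ∫ z, G z * dist x y ∂(stdGaussian (κ 0)) := by
        refine integral_mono ((hIntLoss x hx).sub (hIntLoss y hy)).abs
          (hIntG.mul_const _) ?_
        exact fun z => key x hx y hy z
    _ = (∫ z, G z ∂(stdGaussian (κ 0))) * dist x y := integral_mul_const _ _
    _ ≤ ((∫ z, G z ∂(stdGaussian (κ 0))).toNNReal : ℝ) * dist x y :=
        mul_le_mul_of_nonneg_right (Real.le_coe_toNNReal _) dist_nonneg
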